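/- Let c, c' ∈ ℝ^d and let μ and μ' be the probability measures on K with densities proportional to exp(−‖x − c‖²/2) and exp(−‖x − c'‖²/2) with respect to Lebesgue measure, respectively. Then for every x ∈ K, both density ratios satisfy max((dμ/dμ')(x), (dμ'/dμ)(x)) ≤ exp(sup_{y∈K} ‖c − c'‖·‖2y − c − c'‖), where ‖·‖ is the Euclidean norm. -/

import Mathlib

open MeasureTheory

/-- for the probability measures on `K` with densities proportional to
`exp(−‖x − c‖²/2)` and `exp(−‖x − c'‖²/2)`, both density ratios are bounded pointwise on
`K` by `exp(sup_{y ∈ K} ‖c − c'‖·‖2y − c − c'‖)`. -/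
theorem gaussian_density_ratio_bound
    {d : ℕ} (K : Set (EuclideanSpace ℝ (Fin d)))
    (hKcomp : IsCompact K) (hKconv : Convex ℝ K) (hKint : (interior K).Nonempty)
    (hKpos : 0 < volume K)
    (c c' : EuclideanSpace ℝ (Fin d))
    (Z Z' : ℝ)
    (hZ : Z = ∫ x in K, Real.exp (-‖x - c‖ ^ 2 / 2))
    (hZ' : Z' = ∫ x in K, Real.exp (-‖x - c'‖ ^ 2 / 2)) :
    ∀ x ∈ K,
      max ((Real.exp (-‖x - c‖ ^ 2 / 2) / Z) / (Real.exp (-‖x - c'‖ ^ 2 / 2) / Z'))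
          ((Real.exp (-‖x - c'‖ ^ 2 / 2) / Z') / (Real.exp (-‖x - c‖ ^ 2 / 2) / Z)) ≤
        Real.exp (sSup ((fun y => ‖c - c'‖ * ‖(2 : ℝ) • y - c - c'‖) '' K)) := by
  set S : ℝ := sSup ((fun y => ‖c - c'‖ * ‖(2 : ℝ) • y - c - c'‖) '' K) with hS
  have hKne : K.Nonempty := hKint.mono interior_subset
  -- boundedness of the sup
  have hcont : ContinuousOn (fun y : EuclideanSpace ℝ (Fin d) =>
      ‖c - c'‖ * ‖(2 : ℝ) • y - c - c'‖) K := by fun_prop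
  have hbdd : BddAbove ((fun y => ‖c - c'‖ * ‖(2 : ℝ) • y - c - c'‖) '' K) :=
    (hKcomp.image_of_continuousOn hcont).bddAbove
  -- key pointwise bound
  have key : ∀ y ∈ K, |‖y - c'‖ ^ 2 - ‖y - c‖ ^ 2| ≤ S := by
    intro y hy
    have h1 : ‖y - c'‖ ^ 2 - ‖y - c‖ ^ 2 = inner ℝ (c - c') ((2:ℝ) • y - c - c') := by
      simp only [← real_inner_self_eq_norm_sq, inner_sub_left, inner_sub_right,
        inner_smul_left, inner_smul_right, real_inner_comm y c, real_inner_comm y c',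
        real_inner_comm c c']
      ring
    rw [h1]
    exact (abs_real_inner_le_norm _ _).trans (le_csSup hbdd ⟨y, hy, rfl⟩)
  have keyf : ∀ y ∈ K, Real.exp (-‖y - c‖ ^ 2 / 2) ≤
      Real.exp (S / 2) * Real.exp (-‖y - c'‖ ^ 2 / 2) := by
    intro y hy
    rw [← Real.exp_add]
    apply Real.exp_le_exp.2
    have := (abs_le.1 (key y hy)).2
    linarith
  have keyg : ∀ y ∈ K, Real.exp (-‖y - c'‖ ^ 2 / 2) ≤
      Real.exp (S / 2) * Real.exp (-‖y - c‖ ^ 2 / 2) := by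
    intro y hy
    rw [← Real.exp_add]
    apply Real.exp_le_exp.2
    have := (abs_le.1 (key y hy)).1
    linarith
  -- integrability
  have hintf : IntegrableOn (fun x => Real.exp (-‖x - c‖ ^ 2 / 2)) K := by
    apply ContinuousOn.integrableOn_compact hKcomp
    fun_prop
  have hintg : IntegrableOn (fun x => Real.exp (-‖x - c'‖ ^ 2 / 2)) K := by
    apply ContinuousOn.integrableOn_compact hKcomp
    fun_prop
  have hKmeas : MeasurableSet K := hKcomp.measurableSet
  -- positivity of Z, Z'
  have hZpos : 0 < Z := by
    rw [hZ, setIntegral_pos_iff_support_of_nonneg_ae _ hintf]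
    · have : Function.support (fun x : EuclideanSpace ℝ (Fin d) =>
          Real.exp (-‖x - c‖ ^ 2 / 2)) = Set.univ := by
        ext y; simp [Function.support, (Real.exp_pos _).ne']
      rw [this, Set.univ_inter]; exact hKpos
    · filter_upwards with y using (Real.exp_pos _).le
  have hZ'pos : 0 < Z' := by
    rw [hZ', setIntegral_pos_iff_support_of_nonneg_ae _ hintg]
    · have : Function.support (fun x : EuclideanSpace ℝ (Fin d) =>
          Real.exp (-‖x - c'‖ ^ 2 / 2)) = Set.univ := by
        ext y; simp [Function.support, (Real.exp_pos _).ne']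
      rw [this, Set.univ_inter]; exact hKpos
    · filter_upwards with y using (Real.exp_pos _).le
  -- integral comparisons
  have hZle : Z ≤ Real.exp (S / 2) * Z' := by
    rw [hZ, hZ', ← integral_const_mul]
    exact setIntegral_mono_on hintf (hintg.const_mul _) hKmeas keyf
  have hZ'le : Z' ≤ Real.exp (S / 2) * Z := by
    rw [hZ, hZ', ← integral_const_mul]
    exact setIntegral_mono_on hintg (hintf.const_mul _) hKmeas keyg
  intro x hx
  set a := Real.exp (-‖x - c‖ ^ 2 / 2) with ha
  set b := Real.exp (-‖x - c'‖ ^ 2 / 2) with hb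
  have hapos : 0 < a := Real.exp_pos _
  have hbpos : 0 < b := Real.exp_pos _
  have hexp : Real.exp S = Real.exp (S / 2) * Real.exp (S / 2) := by
    rw [← Real.exp_add]; ring_nf
  have h1 : (a / Z) / (b / Z') ≤ Real.exp S := by
    have heq : (a / Z) / (b / Z') = a * Z' / (b * Z) := by
      field_simp
    rw [heq, div_le_iff₀ (by positivity)]
    have := mul_le_mul (keyf x hx) hZ'le (le_of_lt hZ'pos) (by positivity)
    calc a * Z' ≤ Real.exp (S / 2) * b * (Real.exp (S / 2) * Z) := this
      _ = Real.exp S * (b * Z) := by rw [hexp]; ring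
  have h2 : (b / Z') / (a / Z) ≤ Real.exp S := by
    have heq : (b / Z') / (a / Z) = b * Z / (a * Z') := by
      field_simp
    rw [heq, div_le_iff₀ (by positivity)]
    have := mul_le_mul (keyg x hx) hZle (le_of_lt hZpos) (by positivity)
    calc b * Z ≤ Real.exp (S / 2) * a * (Real.exp (S / 2) * Z') := this
      _ = Real.exp S * (a * Z') := by rw [hexp]; ring
  exact max_le h1 h2
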